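/- For any n×n complex matrix A, the permanent satisfies Ryser's formula: perm(A) = (−1)^n · Σ_{S ⊆ {1,…,n}} (−1)^{|S|} · Π_{i=1}^{n} Σ_{j∈S} a_{i,j}. -/

import Mathlib

open Finset

/-- The permanent of an `n × n` matrix. -/
noncomputable def perma {n : ℕ} (A : Matrix (Fin n) (Fin n) ℂ) : ℂ :=
  ∑ σ : Equiv.Perm (Fin n), ∏ i, A i (σ i)

lemma powerset_neg_one_pow_card_complex {α : Type*} [DecidableEq α] (x : Finset α) :
    (∑ m ∈ x.powerset, (-1 : ℂ) ^ m.card) = if x = ∅ then 1 else 0 := by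
  have h := Finset.sum_powerset_neg_one_pow_card (x := x)
  have hc : ((∑ m ∈ x.powerset, (-1 : ℤ) ^ m.card : ℤ) : ℂ)
      = ∑ m ∈ x.powerset, (-1 : ℂ) ^ m.card := by push_cast; rfl
  rw [← hc, h]
  by_cases hx : x = ∅ <;> simp [hx]

lemma aux_sum {n : ℕ} (T : Finset (Fin n)) :
    (∑ S : Finset (Fin n), if T ⊆ S then (-1 : ℂ) ^ S.card else 0)
      = if T = univ then (-1 : ℂ) ^ n else 0 := by
  have key : (∑ S : Finset (Fin n), if T ⊆ S then (-1 : ℂ) ^ S.card else 0)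
      = ∑ U : Finset (Fin n), if U ⊆ Tᶜ then (-1 : ℂ) ^ (n - U.card) else 0 := by
    refine Finset.sum_nbij' (fun S => Sᶜ) (fun U => Uᶜ) (by simp) (by simp)
      (by simp) (by simp) ?_
    intro S _
    have h1 : T ⊆ S ↔ Sᶜ ⊆ Tᶜ := (Finset.compl_subset_compl).symm
    have h2 : Sᶜ.card = n - S.card := by
      rw [Finset.card_compl, Fintype.card_fin]
    by_cases h : T ⊆ S
    · have hc : S.card ≤ n := by
        simpa using Finset.card_le_card (Finset.subset_univ S)
      simp [h, h1.mp h, h2, Nat.sub_sub_self hc]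
    · simp [h, fun hc => h (h1.mpr hc)]
  rw [key]
  have : ∀ U : Finset (Fin n), U ⊆ Tᶜ → (-1 : ℂ) ^ (n - U.card) = (-1) ^ n * (-1) ^ U.card := by
    intro U _
    have hU : U.card ≤ n := by simpa using Finset.card_le_card (Finset.subset_univ U)
    have : (-1 : ℂ) ^ (n - U.card) * (-1) ^ U.card = (-1) ^ n := by
      rw [← pow_add, Nat.sub_add_cancel hU]
    calc (-1 : ℂ) ^ (n - U.card) = (-1 : ℂ) ^ (n - U.card) * ((-1) ^ U.card * (-1) ^ U.card) := by
          rw [← pow_add, Even.neg_one_pow ⟨U.card, rfl⟩, mul_one]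
      _ = (-1) ^ n * (-1) ^ U.card := by rw [← mul_assoc, this]
  rw [← Finset.sum_filter]
  have hfilter : (univ.filter (fun U : Finset (Fin n) => U ⊆ Tᶜ)) = Tᶜ.powerset := by
    ext U; simp
  rw [hfilter]
  rw [Finset.sum_congr rfl (fun U hU => this U (Finset.mem_powerset.mp hU)),
    ← Finset.mul_sum, powerset_neg_one_pow_card_complex]
  have : Tᶜ = ∅ ↔ T = univ := by simp [Finset.compl_eq_empty_iff]
  by_cases h : T = univ <;> simp [h, this]

theorem ryser_formula {n : ℕ} (A : Matrix (Fin n) (Fin n) ℂ) :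
    perma A
      = (-1 : ℂ) ^ n * ∑ S : Finset (Fin n), (-1 : ℂ) ^ S.card * ∏ i, ∑ j ∈ S, A i j := by
  classical
  have step1 : ∀ S : Finset (Fin n),
      (∏ i, ∑ j ∈ S, A i j)
        = ∑ g : Fin n → Fin n, if ∀ i, g i ∈ S then ∏ i, A i (g i) else 0 := by
    intro S
    rw [Finset.prod_univ_sum (fun _ => S) (fun i j => A i j), ← Finset.sum_filter]
    refine Finset.sum_congr ?_ fun _ _ => rfl
    ext g; simp [Fintype.mem_piFinset]
  have step2 : (∑ S : Finset (Fin n), (-1 : ℂ) ^ S.card * ∏ i, ∑ j ∈ S, A i j)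
      = ∑ g : Fin n → Fin n,
          (if Function.Bijective g then (-1 : ℂ) ^ n else 0) * ∏ i, A i (g i) := by
    calc (∑ S : Finset (Fin n), (-1 : ℂ) ^ S.card * ∏ i, ∑ j ∈ S, A i j)
        = ∑ S : Finset (Fin n), ∑ g : Fin n → Fin n,
            (if ∀ i, g i ∈ S then (-1 : ℂ) ^ S.card else 0) * ∏ i, A i (g i) := by
          refine Finset.sum_congr rfl fun S _ => ?_
          rw [step1 S, Finset.mul_sum]
          refine Finset.sum_congr rfl fun g _ => ?_
          by_cases h : ∀ i, g i ∈ S <;> simp [h]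
      _ = ∑ g : Fin n → Fin n, ∑ S : Finset (Fin n),
            (if ∀ i, g i ∈ S then (-1 : ℂ) ^ S.card else 0) * ∏ i, A i (g i) :=
          Finset.sum_comm
      _ = ∑ g : Fin n → Fin n,
            (if Function.Bijective g then (-1 : ℂ) ^ n else 0) * ∏ i, A i (g i) := by
          refine Finset.sum_congr rfl fun g _ => ?_
          rw [← Finset.sum_mul]
          congr 1
          have h1 : ∀ S : Finset (Fin n), (∀ i, g i ∈ S) ↔ Finset.image g univ ⊆ S := by
            intro S; simp [Finset.image_subset_iff]
          have h2 : (∑ S : Finset (Fin n), if ∀ i, g i ∈ S then (-1 : ℂ) ^ S.card else 0)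
              = ∑ S : Finset (Fin n), if Finset.image g univ ⊆ S then (-1 : ℂ) ^ S.card else 0 := by
            refine Finset.sum_congr rfl fun S _ => ?_
            simp [h1 S]
          rw [h2, aux_sum]
          have h3 : Finset.image g univ = univ ↔ Function.Bijective g := by
            constructor
            · intro h
              have hsurj : Function.Surjective g := by
                intro y
                have : y ∈ Finset.image g univ := by rw [h]; exact Finset.mem_univ y
                simpa using this
              exact ⟨Finite.injective_iff_surjective.mpr hsurj, hsurj⟩
            · intro h
              apply Finset.eq_univ_of_forall
              intro y
              obtain ⟨x, hx⟩ := h.2 y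
              exact Finset.mem_image.mpr ⟨x, Finset.mem_univ x, hx⟩
          simp [h3]
  rw [step2]
  have step3 : (∑ g : Fin n → Fin n,
      (if Function.Bijective g then (-1 : ℂ) ^ n else 0) * ∏ i, A i (g i))
      = (-1 : ℂ) ^ n * perma A := by
    have e1 : (∑ g : Fin n → Fin n,
        (if Function.Bijective g then (-1 : ℂ) ^ n else 0) * ∏ i, A i (g i))
        = ∑ g ∈ univ.filter (fun g : Fin n → Fin n => Function.Bijective g),
            (-1 : ℂ) ^ n * ∏ i, A i (g i) := by
      rw [Finset.sum_filter]
      refine Finset.sum_congr rfl fun g _ => ?_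
      by_cases h : Function.Bijective g <;> simp [h]
    have e2 : (∑ g ∈ univ.filter (fun g : Fin n → Fin n => Function.Bijective g),
        (-1 : ℂ) ^ n * ∏ i, A i (g i))
        = ∑ σ : Equiv.Perm (Fin n), (-1 : ℂ) ^ n * ∏ i, A i (σ i) := by
      symm
      refine Finset.sum_nbij' (fun σ : Equiv.Perm (Fin n) => ⇑σ)
        (fun g => if h : Function.Bijective g then Equiv.ofBijective g h else Equiv.refl _)
        ?_ ?_ ?_ ?_ ?_
      · intro σ _
        simp only [Finset.mem_filter, Finset.mem_univ, true_and]
        exact σ.bijective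
      · intro g hg; simp
      · intro σ _
        simp -failIfUnchanged only [Finset.mem_filter] at *
        rw [dif_pos σ.bijective]
        ext x; simp [Equiv.ofBijective]
      · intro g hg
        simp only [Finset.mem_filter, Finset.mem_univ, true_and] at hg
        show ⇑(if h : Function.Bijective g then Equiv.ofBijective g h else Equiv.refl _) = g
        rw [dif_pos hg]
        rfl
      · intro σ _; rfl
    rw [e1, e2, perma, Finset.mul_sum]
  rw [step3, ← mul_assoc, ← pow_add, Even.neg_one_pow ⟨n, rfl⟩, one_mul]
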